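/- arXiv:1310.5395 — 7 statements merged into one kernel-verified Lean document; each statement's English description precedes it below -/
import Mathlib

section
/- Let (𝔤, ω, J, g) be a left-invariant pseudo-Kähler structure on a Lie algebra, where g(X,Y) = ω(X,JY). If X lies in the center Z of 𝔤 and the subspace [𝔤,𝔤] + J([𝔤,𝔤]) is ω-orthogonal to the J-invariant central ideal containing X, then the Levi-Civita covariant derivative satisfies ∇_X Y = ∇_Y X = 0 for all Y ∈ 𝔤. -/
/-- On a pseudo-Kähler Lie algebra (𝔤, ω, J, g) with g(X,Y) = ω(X,JY),
if X lies in the center and [𝔤,𝔤] + J([𝔤,𝔤]) is ω-orthogonal to the J-invariant central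
ideal 𝔞₁(J) containing X, then ∇_X Y = ∇_Y X = 0 for all Y. -/
theorem nabla_vanishes_on_a1
    {L : Type*} [LieRing L] [LieAlgebra ℝ L] [FiniteDimensional ℝ L]
    (ω : L →ₗ[ℝ] L →ₗ[ℝ] ℝ)
    (halt : ∀ X : L, ω X X = 0)
    (hclosed : ∀ X Y Z : L, ω ⁅X, Y⁆ Z - ω ⁅X, Z⁆ Y + ω ⁅Y, Z⁆ X = 0)
    (hωnd : ∀ X : L, (∀ Y : L, ω X Y = 0) → X = 0)
    (J : L →ₗ[ℝ] L)
    (hJ2 : ∀ X : L, J (J X) = -X)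
    (hNij : ∀ X Y : L, ⁅J X, J Y⁆ - ⁅X, Y⁆ - J ⁅J X, Y⁆ - J ⁅X, J Y⁆ = 0)
    (hcompat : ∀ X Y : L, ω (J X) (J Y) = ω X Y)
    (g : L → L → ℝ)
    (hg : ∀ X Y : L, g X Y = ω X (J Y))
    (hgnd : ∀ X : L, (∀ Y : L, g X Y = 0) → X = 0)
    -- [𝔤,𝔤] + J([𝔤,𝔤]) is ω-orthogonal to 𝔞₁(J) = {Z : [Z,𝔤]=0 and [JZ,𝔤]=0}
    (horth : ∀ W ∈ Submodule.span ℝ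
        ({w : L | ∃ X Y : L, w = ⁅X, Y⁆} ∪ {w : L | ∃ X Y : L, w = J ⁅X, Y⁆}),
      ∀ Z : L, (∀ U : L, ⁅Z, U⁆ = 0) → (∀ U : L, ⁅J Z, U⁆ = 0) → ω W Z = 0)
    (nabla : L → L → L)
    (hkoszul : ∀ X Y Z : L,
      2 * g (nabla X Y) Z = g ⁅X, Y⁆ Z + g ⁅Z, X⁆ Y + g X ⁅Z, Y⁆)
    (X : L) (hX : ∀ U : L, ⁅X, U⁆ = 0) (hJX : ∀ U : L, ⁅J X, U⁆ = 0) :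
    ∀ Y : L, nabla X Y = 0 ∧ nabla Y X = 0 := by
  have hskew : ∀ A B : L, ω A B = -ω B A := by
    intro A B
    have h := halt (A + B)
    simp [map_add, halt A, halt B] at h
    linarith
  have hJXcen : ∀ U : L, ⁅J (J X), U⁆ = 0 := by
    intro U; rw [hJ2]; simp [hX U]
  intro Y
  constructor
  · apply hgnd
    intro Z
    have hk := hkoszul X Y Z
    have h1 : g ⁅X, Y⁆ Z = 0 := by rw [hX Y]; simp [hg, map_zero]
    have h2 : g ⁅Z, X⁆ Y = 0 := by
      have : ⁅Z, X⁆ = 0 := by rw [← lie_skew, hX Z]; simp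
      rw [this]; simp [hg, map_zero]
    have h3 : g X ⁅Z, Y⁆ = 0 := by
      rw [hg, hskew]
      have hmem : J ⁅Z, Y⁆ ∈ Submodule.span ℝ
          ({w : L | ∃ X Y : L, w = ⁅X, Y⁆} ∪ {w : L | ∃ X Y : L, w = J ⁅X, Y⁆}) :=
        Submodule.subset_span (Or.inr ⟨Z, Y, rfl⟩)
      rw [horth _ hmem X hX hJX]; ring
    have := hk
    rw [h1, h2, h3] at this
    linarith
  · apply hgnd
    intro Z
    have hk := hkoszul Y X Z
    have h1 : g ⁅Y, X⁆ Z = 0 := by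
      have : ⁅Y, X⁆ = 0 := by rw [← lie_skew, hX Y]; simp
      rw [this]; simp [hg, map_zero]
    have h2 : g ⁅Z, Y⁆ X = 0 := by
      rw [hg]
      have hmem : ⁅Z, Y⁆ ∈ Submodule.span ℝ
          ({w : L | ∃ X Y : L, w = ⁅X, Y⁆} ∪ {w : L | ∃ X Y : L, w = J ⁅X, Y⁆}) :=
        Submodule.subset_span (Or.inl ⟨Z, Y, rfl⟩)
      exact horth _ hmem (J X) hJX hJXcen
    have h3 : g Y ⁅Z, X⁆ = 0 := by
      have : ⁅Z, X⁆ = 0 := by rw [← lie_skew, hX Z]; simp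
      rw [this]; simp [hg, map_zero]
    have := hk
    rw [h1, h2, h3] at this
    linarith
end

section
/- Let 𝔤 be a 6-dimensional real Lie algebra with basis e₁,…,e₆ and nonzero brackets [e₁,e₂] = e₄, [e₁,e₄] = e₆, [e₂,e₃] = e₆ (the Lie algebra 𝔤₂₁). Then the 2-form ω = e¹∧e⁶ + e²∧e⁵ − e³∧e⁴ (in the dual basis) is closed and nondegenerate, i.e., a symplectic form on 𝔤. -/
noncomputable section

/-- The underlying space ℝ⁶ of the Lie algebra 𝔤₂₁. -/
abbrev V21 : Type := Fin 6 → ℝ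

/-- Standard basis vectors e₁,…,e₆ (0-indexed). -/
def e21 (i : Fin 6) : V21 := Pi.single i 1

/-- Bracket of 𝔤₂₁: [e₁,e₂] = e₄, [e₁,e₄] = e₆, [e₂,e₃] = e₆. -/
def br21 (X Y : V21) : V21 :=
  ![0, 0, 0, X 0 * Y 1 - X 1 * Y 0, 0,
    (X 0 * Y 3 - X 3 * Y 0) + (X 1 * Y 2 - X 2 * Y 1)]

/-- ω = e¹∧e⁶ + e²∧e⁵ − e³∧e⁴. -/
def om21 (X Y : V21) : ℝ :=
  (X 0 * Y 5 - X 5 * Y 0) + (X 1 * Y 4 - X 4 * Y 1) - (X 2 * Y 3 - X 3 * Y 2)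

lemma v6 (a b c d e f : ℝ) :
    ![a,b,c,d,e,f] 0 = a ∧ ![a,b,c,d,e,f] 1 = b ∧ ![a,b,c,d,e,f] 2 = c ∧
    ![a,b,c,d,e,f] 3 = d ∧ ![a,b,c,d,e,f] 4 = e ∧ ![a,b,c,d,e,f] 5 = f :=
  ⟨rfl, rfl, rfl, rfl, rfl, rfl⟩

lemma v6m0 (a b c d e f : ℝ) (h : 0 < 6) : ![a,b,c,d,e,f] ⟨0, h⟩ = a := rfl
lemma v6m1 (a b c d e f : ℝ) (h : 1 < 6) : ![a,b,c,d,e,f] ⟨1, h⟩ = b := rfl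
lemma v6m2 (a b c d e f : ℝ) (h : 2 < 6) : ![a,b,c,d,e,f] ⟨2, h⟩ = c := rfl
lemma v6m3 (a b c d e f : ℝ) (h : 3 < 6) : ![a,b,c,d,e,f] ⟨3, h⟩ = d := rfl
lemma v6m4 (a b c d e f : ℝ) (h : 4 < 6) : ![a,b,c,d,e,f] ⟨4, h⟩ = e := rfl
lemma v6m5 (a b c d e f : ℝ) (h : 5 < 6) : ![a,b,c,d,e,f] ⟨5, h⟩ = f := rfl

/-- the bracket of 𝔤₂₁ satisfies the Jacobi identity, and
ω = e¹∧e⁶ + e²∧e⁵ − e³∧e⁴ is a closed and nondegenerate 2-form on 𝔤₂₁. -/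
theorem g21_omega_symplectic :
    (∀ X Y Z : V21,
      br21 (br21 X Y) Z + br21 (br21 Y Z) X + br21 (br21 Z X) Y = 0) ∧
    (∀ X Y Z : V21,
      om21 (br21 X Y) Z - om21 (br21 X Z) Y + om21 (br21 Y Z) X = 0) ∧
    (∀ X : V21, (∀ Y : V21, om21 X Y = 0) → X = 0) := by
  refine ⟨?_, ?_, ?_⟩
  · intro X Y Z
    funext i
    fin_cases i <;> simp only [br21, Pi.add_apply, Pi.zero_apply, v6m0, v6m1, v6m2, v6m3, v6m4, v6m5, (v6 _ _ _ _ _ _).1, (v6 _ _ _ _ _ _).2.1, (v6 _ _ _ _ _ _).2.2.1, (v6 _ _ _ _ _ _).2.2.2.1, (v6 _ _ _ _ _ _).2.2.2.2.1, (v6 _ _ _ _ _ _).2.2.2.2.2] <;> ring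
  · intro X Y Z
    simp only [om21, br21, (v6 _ _ _ _ _ _).1, (v6 _ _ _ _ _ _).2.1, (v6 _ _ _ _ _ _).2.2.1, (v6 _ _ _ _ _ _).2.2.2.1, (v6 _ _ _ _ _ _).2.2.2.2.1, (v6 _ _ _ _ _ _).2.2.2.2.2]
    ring
  · intro X h
    funext i
    fin_cases i <;>
      [have := h (e21 5); have := h (e21 4); have := h (e21 3);
       have := h (e21 2); have := h (e21 1); have := h (e21 0)] <;>
      simp [om21, e21, Pi.single_apply] at this <;> simpa using this
end
end

section
/- On the Lie algebra 𝔤₂₁ with brackets [e₁,e₂]=e₄, [e₁,e₄]=e₆, [e₂,e₃]=e₆ and symplectic form ω = e¹∧e⁶ + e²∧e⁵ − e³∧e⁴, the almost complex structure J defined by J(e₂) = -a e₁, J(e₁) = (1/a) e₂, J(e₄) = a e₃, J(e₃) = -(1/a) e₄, J(e₆) = a e₅, J(e₅) = -(1/a) e₆ (for a ≠ 0) satisfies J² = -Id, is integrable (Nijenhuis tensor N_J = 0), and is compatible with ω (ω(JX,JY) = ω(X,Y)). -/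
noncomputable section

/-- J with J(e₂) = -a·e₁, J(e₁) = (1/a)·e₂, J(e₄) = a·e₃, J(e₃) = -(1/a)·e₄,
J(e₆) = a·e₅, J(e₅) = -(1/a)·e₆. -/
def J21 (a : ℝ) (X : V21) : V21 :=
  ![-a * X 1, (1 / a) * X 0, a * X 3, -(1 / a) * X 2, a * X 5, -(1 / a) * X 4]


lemma cv5 {α : Type*} (x0 x1 x2 x3 x4 x5 : α) :
    (![x0, x1, x2, x3, x4, x5] : Fin 6 → α) 5 = x5 := rfl

/-- for a ≠ 0, J satisfies J² = -Id, is integrable (Nijenhuis tensor zero),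
and is compatible with ω on 𝔤₂₁. -/
theorem g21_J_complex_compatible (a : ℝ) (ha : a ≠ 0) :
    (∀ X : V21, J21 a (J21 a X) = -X) ∧
    (∀ X Y : V21,
      br21 (J21 a X) (J21 a Y) - br21 X Y
        - J21 a (br21 (J21 a X) Y) - J21 a (br21 X (J21 a Y)) = 0) ∧
    (∀ X Y : V21, om21 (J21 a X) (J21 a Y) = om21 X Y) := by
  refine ⟨fun X => ?_, fun X Y => ?_, fun X Y => ?_⟩
  · funext i
    fin_cases i <;> simp [J21, cv5] <;> field_simp <;> ring
  · funext i
    fin_cases i <;> simp [J21, br21, cv5] <;> field_simp <;> ring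
  · simp [J21, om21, cv5] ; field_simp ; ring
end
end

section
/- The associated pseudo-Kähler metric g on 𝔤₂₁ (with ω = e¹∧e⁶ + e²∧e⁵ − e³∧e⁴ and J(e₂)=-ae₁, J(e₄)=ae₃, J(e₆)=ae₅, a ≠ 0) is Ricci-flat: the Ricci tensor Ric(X,Y) = trace(Z ↦ R(Z,X)Y) vanishes identically. -/
noncomputable section

/-- Associated metric g(X,Y) = ω(X, JY). -/
def g21 (a : ℝ) (X Y : V21) : ℝ := om21 X (J21 a Y)

section VecSimp
variable {α : Type*} (x0 x1 x2 x3 x4 x5 : α)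
@[simp] lemma vec6_0 : ![x0,x1,x2,x3,x4,x5] 0 = x0 := rfl
@[simp] lemma vec6_1 : ![x0,x1,x2,x3,x4,x5] 1 = x1 := rfl
@[simp] lemma vec6_2 : ![x0,x1,x2,x3,x4,x5] 2 = x2 := rfl
@[simp] lemma vec6_3 : ![x0,x1,x2,x3,x4,x5] 3 = x3 := rfl
@[simp] lemma vec6_4 : ![x0,x1,x2,x3,x4,x5] 4 = x4 := rfl
@[simp] lemma vec6_5 : ![x0,x1,x2,x3,x4,x5] 5 = x5 := rfl
end VecSimp

lemma cancel_aux (a w r : ℝ) (ha : a ≠ 0) (h : a * (w - r) = 0) : w = r := by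
  rcases mul_eq_zero.1 h with h' | h'
  · exact absurd h' ha
  · linarith

def Nab (a : ℝ) (X Y : V21) : V21 :=
  ![0, 0, -a^2 * (X 1 * Y 1), -(X 1 * Y 0), -a^2 * (X 1 * Y 3 + X 3 * Y 1),
    X 1 * Y 2 - X 3 * Y 0]


/-- the associated pseudo-Kähler metric on 𝔤₂₁ is Ricci-flat:
Ric(X,Y) = trace(Z ↦ R(Z,X)Y) = 0 (trace computed in the standard basis). -/
theorem g21_ricci_flat (a : ℝ) (ha : a ≠ 0)
    (nabla : V21 → V21 → V21)
    (hkoszul : ∀ X Y Z : V21,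
      2 * g21 a (nabla X Y) Z
        = g21 a (br21 X Y) Z + g21 a (br21 Z X) Y + g21 a X (br21 Z Y))
    (R : V21 → V21 → V21 → V21)
    (hR : ∀ X Y Z : V21,
      R X Y Z = nabla X (nabla Y Z) - nabla Y (nabla X Z) - nabla (br21 X Y) Z) :
    ∀ X Y : V21, (∑ i : Fin 6, R (e21 i) X Y i) = 0 := by
  have hnab : ∀ X Y : V21, nabla X Y = Nab a X Y := by
    intro X Y
    funext k
    fin_cases k
    · have h := hkoszul X Y (e21 4)
      simp [g21, om21, J21, br21, e21, Pi.single_apply, Nab] at h ⊢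
      rcases h with h | h
      · exact h
      · exact absurd h ha
    · have h := hkoszul X Y (e21 5)
      simp [g21, om21, J21, br21, e21, Pi.single_apply, Nab] at h ⊢
      rcases h with h | h
      · exact h
      · exact absurd h ha
    · have h := hkoszul X Y (e21 2)
      simp [g21, om21, J21, br21, e21, Pi.single_apply, Nab] at h ⊢
      field_simp at h
      linarith
    · have h := hkoszul X Y (e21 3)
      simp [g21, om21, J21, br21, e21, Pi.single_apply, Nab] at h ⊢
      refine cancel_aux a _ _ ha ?_
      linear_combination h / 2
    · have h := hkoszul X Y (e21 0)
      simp [g21, om21, J21, br21, e21, Pi.single_apply, Nab] at h ⊢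
      field_simp at h
      linarith
    · have h := hkoszul X Y (e21 1)
      simp [g21, om21, J21, br21, e21, Pi.single_apply, Nab] at h ⊢
      refine cancel_aux a _ _ ha ?_
      linear_combination h / 2
  intro X Y
  simp only [hR, hnab]
  rw [Fin.sum_univ_six]
  simp [Nab, br21, e21, Pi.single_apply]
end
end

section
/- Let 𝔤 be a 6-dimensional Lie algebra of type (2,4,6) decomposed as 𝔤 = A ⊕ B ⊕ Z where Z is the 2-dimensional center, B ⊕ Z is abelian, [A,A] ⊆ B⊕Z, [A,B] ⊆ Z. Let ω be a symplectic form such that A and Z are ω-isotropic and ω-dual, and ω is nondegenerate on B. Let J be a compatible nilpotent complex structure preserving B⊕Z and Z, and g = ω∘J the associated metric. Then ∇_X Y = 0 for all X, Y ∈ B ⊕ Z. -/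
/-- type-(2,4,6) theorem, part: ∇_X Y = 0 for X, Y ∈ B ⊕ Z. -/
theorem type246_nabla_BZ_zero
    {L : Type*} [LieRing L] [LieAlgebra ℝ L] [FiniteDimensional ℝ L]
    (A B Zc : Submodule ℝ L)
    (hdimL : Module.finrank ℝ L = 6)
    (hdimA : Module.finrank ℝ A = 2)
    (hdimB : Module.finrank ℝ B = 2)
    (hdimZ : Module.finrank ℝ Zc = 2)
    (hspan : A ⊔ B ⊔ Zc = ⊤)
    -- Zc is the center of 𝔤
    (hZc : ∀ z ∈ Zc, ∀ Y : L, ⁅z, Y⁆ = 0)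
    (hZc' : ∀ z : L, (∀ Y : L, ⁅z, Y⁆ = 0) → z ∈ Zc)
    -- B ⊕ Z is abelian
    (habel : ∀ x ∈ B ⊔ Zc, ∀ y ∈ B ⊔ Zc, ⁅x, y⁆ = 0)
    -- [A,A] ⊆ B ⊕ Z, [A,B] ⊆ Z
    (hAA : ∀ x ∈ A, ∀ y ∈ A, ⁅x, y⁆ ∈ B ⊔ Zc)
    (hAB : ∀ x ∈ A, ∀ y ∈ B, ⁅x, y⁆ ∈ Zc)
    -- ω is symplectic
    (ω : L →ₗ[ℝ] L →ₗ[ℝ] ℝ)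
    (halt : ∀ X : L, ω X X = 0)
    (hclosed : ∀ X Y Z : L, ω ⁅X, Y⁆ Z - ω ⁅X, Z⁆ Y + ω ⁅Y, Z⁆ X = 0)
    (hnd : ∀ X : L, (∀ Y : L, ω X Y = 0) → X = 0)
    -- A and Z are ω-isotropic and ω-dual, ω nondegenerate on B, B ⊥ (A ⊕ Z)
    (hAiso : ∀ x ∈ A, ∀ y ∈ A, ω x y = 0)
    (hZiso : ∀ x ∈ Zc, ∀ y ∈ Zc, ω x y = 0)
    (hdualAZ : ∀ x ∈ A, x ≠ 0 → ∃ z ∈ Zc, ω x z ≠ 0)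
    (hdualZA : ∀ z ∈ Zc, z ≠ 0 → ∃ x ∈ A, ω x z ≠ 0)
    (hBnd : ∀ x ∈ B, x ≠ 0 → ∃ y ∈ B, ω x y ≠ 0)
    (hBorth : ∀ x ∈ B, ∀ y ∈ A ⊔ Zc, ω x y = 0)
    -- J is a compatible complex structure preserving Z and B ⊕ Z
    (J : L →ₗ[ℝ] L)
    (hJ2 : ∀ X : L, J (J X) = -X)
    (hNij : ∀ X Y : L, ⁅J X, J Y⁆ - ⁅X, Y⁆ - J ⁅J X, Y⁆ - J ⁅X, J Y⁆ = 0)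
    (hcompat : ∀ X Y : L, ω (J X) (J Y) = ω X Y)
    (hJZ : ∀ z ∈ Zc, J z ∈ Zc)
    (hJBZ : ∀ x ∈ B ⊔ Zc, J x ∈ B ⊔ Zc)
    -- associated metric and Levi-Civita connection
    (g : L → L → ℝ) (hg : ∀ X Y : L, g X Y = ω X (J Y))
    (nabla : L → L → L)
    (hkoszul : ∀ X Y Z : L,
      2 * g (nabla X Y) Z = g ⁅X, Y⁆ Z + g ⁅Z, X⁆ Y + g X ⁅Z, Y⁆) :
    ∀ X ∈ B ⊔ Zc, ∀ Y ∈ B ⊔ Zc, nabla X Y = 0 := by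

  intro X hX Y hY
  -- antisymmetry of ω
  have hanti : ∀ a b : L, ω a b = -ω b a := by
    intro a b
    have h := halt (a + b)
    simp only [map_add, LinearMap.add_apply, halt a, halt b] at h
    linarith
  -- [W, x] ∈ Zc for any W and x ∈ B ⊔ Zc
  have hbr : ∀ (W x : L), x ∈ B ⊔ Zc → ⁅W, x⁆ ∈ Zc := by
    intro W x hx
    have hW : W ∈ A ⊔ B ⊔ Zc := hspan ▸ Submodule.mem_top
    obtain ⟨u, hu, z, hz, rfl⟩ := Submodule.mem_sup.mp hW
    obtain ⟨a, ha, b, hb, rfl⟩ := Submodule.mem_sup.mp hu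
    obtain ⟨b', hb', z', hz', rfl⟩ := Submodule.mem_sup.mp hx
    have h1 : ⁅a, b'⁆ ∈ Zc := hAB a ha b' hb'
    have h2 : ⁅a, z'⁆ = 0 := by
      rw [← lie_skew, hZc z' hz' a, neg_zero]
    have h3 : ⁅b, b'⁆ = 0 :=
      habel b (Submodule.mem_sup_left hb) b' (Submodule.mem_sup_left hb')
    have h4 : ⁅b, z'⁆ = 0 :=
      habel b (Submodule.mem_sup_left hb) z' (Submodule.mem_sup_right hz')
    have h5 : ⁅z, b'⁆ = 0 := hZc z hz b'
    have h6 : ⁅z, z'⁆ = 0 := hZc z hz z'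
    have : ⁅a + b + z, b' + z'⁆ = ⁅a, b'⁆ := by
      simp [add_lie, lie_add, h2, h3, h4, h5, h6]
    rw [this]; exact h1
  -- ω vanishes between Zc and B ⊔ Zc (both orders)
  have hzx : ∀ z ∈ Zc, ∀ x ∈ B ⊔ Zc, ω z x = 0 := by
    intro z hz x hx
    obtain ⟨b, hb, z', hz', rfl⟩ := Submodule.mem_sup.mp hx
    have h1 : ω z b = 0 := by
      rw [hanti, hBorth b hb z (Submodule.mem_sup_right hz), neg_zero]
    have h2 : ω z z' = 0 := hZiso z hz z' hz'
    simp [map_add, h1, h2]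
  have hxz : ∀ x ∈ B ⊔ Zc, ∀ z ∈ Zc, ω x z = 0 := by
    intro x hx z hz
    rw [hanti]; rw [hzx z hz x hx, neg_zero]
  -- main computation: g (nabla X Y) W = 0 for all W
  have key : ∀ W : L, g (nabla X Y) W = 0 := by
    intro W
    have hK := hkoszul X Y W
    have hXY : ⁅X, Y⁆ = 0 := habel X hX Y hY
    have t1 : g ⁅X, Y⁆ W = 0 := by
      rw [hXY, hg]; simp
    have t2 : g ⁅W, X⁆ Y = 0 := by
      rw [hg]; exact hzx _ (hbr W X hX) _ (hJBZ Y hY)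
    have t3 : g X ⁅W, Y⁆ = 0 := by
      rw [hg]; exact hxz X hX _ (hJZ _ (hbr W Y hY))
    rw [t1, t2, t3] at hK
    linarith
  apply hnd
  intro V
  have := key (-(J V))
  rw [hg] at this
  rw [map_neg, hJ2, neg_neg] at this
  exact this
end

section
/- Under the hypotheses of the type-(2,4,6) theorem (𝔤 = A ⊕ B ⊕ Z with ω-isotropic ω-dual A, Z and abelian B⊕Z), for all X ∈ A and Y ∈ Z, ∇_X Y = ∇_Y X = 0. -/
/-- type-(2,4,6) theorem, part: ∇_X Y = ∇_Y X = 0 for X ∈ A, Y ∈ Z. -/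
theorem type246_nabla_A_Z_zero
    {L : Type*} [LieRing L] [LieAlgebra ℝ L] [FiniteDimensional ℝ L]
    (A B Zc : Submodule ℝ L)
    (hdimL : Module.finrank ℝ L = 6)
    (hdimA : Module.finrank ℝ A = 2)
    (hdimB : Module.finrank ℝ B = 2)
    (hdimZ : Module.finrank ℝ Zc = 2)
    (hspan : A ⊔ B ⊔ Zc = ⊤)
    -- Zc is the center of 𝔤
    (hZc : ∀ z ∈ Zc, ∀ Y : L, ⁅z, Y⁆ = 0)
    (hZc' : ∀ z : L, (∀ Y : L, ⁅z, Y⁆ = 0) → z ∈ Zc)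
    -- B ⊕ Z is abelian
    (habel : ∀ x ∈ B ⊔ Zc, ∀ y ∈ B ⊔ Zc, ⁅x, y⁆ = 0)
    -- [A,A] ⊆ B ⊕ Z, [A,B] ⊆ Z
    (hAA : ∀ x ∈ A, ∀ y ∈ A, ⁅x, y⁆ ∈ B ⊔ Zc)
    (hAB : ∀ x ∈ A, ∀ y ∈ B, ⁅x, y⁆ ∈ Zc)
    -- ω is symplectic
    (ω : L →ₗ[ℝ] L →ₗ[ℝ] ℝ)
    (halt : ∀ X : L, ω X X = 0)
    (hclosed : ∀ X Y Z : L, ω ⁅X, Y⁆ Z - ω ⁅X, Z⁆ Y + ω ⁅Y, Z⁆ X = 0)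
    (hnd : ∀ X : L, (∀ Y : L, ω X Y = 0) → X = 0)
    -- A and Z are ω-isotropic and ω-dual, ω nondegenerate on B, B ⊥ (A ⊕ Z)
    (hAiso : ∀ x ∈ A, ∀ y ∈ A, ω x y = 0)
    (hZiso : ∀ x ∈ Zc, ∀ y ∈ Zc, ω x y = 0)
    (hdualAZ : ∀ x ∈ A, x ≠ 0 → ∃ z ∈ Zc, ω x z ≠ 0)
    (hdualZA : ∀ z ∈ Zc, z ≠ 0 → ∃ x ∈ A, ω x z ≠ 0)
    (hBnd : ∀ x ∈ B, x ≠ 0 → ∃ y ∈ B, ω x y ≠ 0)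
    (hBorth : ∀ x ∈ B, ∀ y ∈ A ⊔ Zc, ω x y = 0)
    -- J is a compatible complex structure preserving Z and B ⊕ Z
    (J : L →ₗ[ℝ] L)
    (hJ2 : ∀ X : L, J (J X) = -X)
    (hNij : ∀ X Y : L, ⁅J X, J Y⁆ - ⁅X, Y⁆ - J ⁅J X, Y⁆ - J ⁅X, J Y⁆ = 0)
    (hcompat : ∀ X Y : L, ω (J X) (J Y) = ω X Y)
    (hJZ : ∀ z ∈ Zc, J z ∈ Zc)
    (hJBZ : ∀ x ∈ B ⊔ Zc, J x ∈ B ⊔ Zc)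
    -- associated metric and Levi-Civita connection
    (g : L → L → ℝ) (hg : ∀ X Y : L, g X Y = ω X (J Y))
    (nabla : L → L → L)
    (hkoszul : ∀ X Y Z : L,
      2 * g (nabla X Y) Z = g ⁅X, Y⁆ Z + g ⁅Z, X⁆ Y + g X ⁅Z, Y⁆) :
    ∀ X ∈ A, ∀ Y ∈ Zc, nabla X Y = 0 ∧ nabla Y X = 0 := by
  intro X hX Y hY
  have hanti : ∀ U V : L, ω U V = -ω V U := by
    intro U V
    have h := halt (U + V)
    simp only [map_add, LinearMap.add_apply] at h
    have h1 := halt U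
    have h2 := halt V
    linarith
  have hzlie : ∀ W : L, ∀ z : L, z ∈ Zc → ⁅W, z⁆ = 0 := by
    intro W z hz
    rw [← lie_skew, hZc z hz W, neg_zero]
  have hkey : ∀ W : L, ∀ z ∈ Zc, ω ⁅W, X⁆ z = 0 := by
    intro W z hz
    have h := hclosed W X z
    rw [hzlie W z hz, hzlie X z hz] at h
    simp only [map_zero, LinearMap.zero_apply] at h
    linarith
  have hgzero : ∀ V : L, (∀ W : L, g V W = 0) → V = 0 := by
    intro V hV
    apply hnd
    intro U
    have := hV (-(J U))
    rw [hg, map_neg, hJ2, neg_neg] at this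
    exact this
  constructor
  · apply hgzero
    intro W
    have hXY : ⁅X, Y⁆ = (0:L) := hzlie X Y hY
    have hWY : ⁅W, Y⁆ = (0:L) := hzlie W Y hY
    have h := hkoszul X Y W
    rw [hXY, hWY] at h
    simp only [hg, map_zero, LinearMap.zero_apply] at h ⊢
    have h2 : ω ⁅W, X⁆ (J Y) = 0 := hkey W (J Y) (hJZ Y hY)
    linarith
  · apply hgzero
    intro W
    have hYX : ⁅Y, X⁆ = (0:L) := hZc Y hY X
    have hWY : ⁅W, Y⁆ = (0:L) := hzlie W Y hY
    have h := hkoszul Y X W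
    rw [hYX, hWY] at h
    simp only [hg, map_zero, LinearMap.zero_apply] at h ⊢
    have h4 : ω ⁅W, X⁆ (J Y) = 0 := hkey W (J Y) (hJZ Y hY)
    have h5 := hanti (J Y) ⁅W, X⁆
    have h6 := hcompat Y (J ⁅W, X⁆)
    rw [hJ2] at h6
    simp only [map_neg] at h6
    linarith
end

section
/- Under the hypotheses of the type-(2,4,6) theorem, the curvature tensor R of the associated metric g = ω∘J satisfies R(X,Y)Z ∈ Z (the center) for all X, Y, Z ∈ 𝔤, and consequently the scalar square g(R,R) of the curvature tensor is zero and the Ricci tensor vanishes. -/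
/-- type-(2,4,6) theorem: the curvature takes values in the center Z,
the scalar square g(R,R) vanishes, and the Ricci tensor vanishes. -/
theorem type246_curvature_central_null_ricci_flat
    {L : Type*} [LieRing L] [LieAlgebra ℝ L] [FiniteDimensional ℝ L]
    (A B Zc : Submodule ℝ L)
    (hdimL : Module.finrank ℝ L = 6)
    (hdimA : Module.finrank ℝ A = 2)
    (hdimB : Module.finrank ℝ B = 2)
    (hdimZ : Module.finrank ℝ Zc = 2)
    (hspan : A ⊔ B ⊔ Zc = ⊤)
    -- Zc is the center of 𝔤
    (hZc : ∀ z ∈ Zc, ∀ Y : L, ⁅z, Y⁆ = 0)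
    (hZc' : ∀ z : L, (∀ Y : L, ⁅z, Y⁆ = 0) → z ∈ Zc)
    -- B ⊕ Z is abelian
    (habel : ∀ x ∈ B ⊔ Zc, ∀ y ∈ B ⊔ Zc, ⁅x, y⁆ = 0)
    -- [A,A] ⊆ B ⊕ Z, [A,B] ⊆ Z
    (hAA : ∀ x ∈ A, ∀ y ∈ A, ⁅x, y⁆ ∈ B ⊔ Zc)
    (hAB : ∀ x ∈ A, ∀ y ∈ B, ⁅x, y⁆ ∈ Zc)
    -- ω is symplectic
    (ω : L →ₗ[ℝ] L →ₗ[ℝ] ℝ)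
    (halt : ∀ X : L, ω X X = 0)
    (hclosed : ∀ X Y Z : L, ω ⁅X, Y⁆ Z - ω ⁅X, Z⁆ Y + ω ⁅Y, Z⁆ X = 0)
    (hnd : ∀ X : L, (∀ Y : L, ω X Y = 0) → X = 0)
    -- A and Z are ω-isotropic and ω-dual, ω nondegenerate on B, B ⊥ (A ⊕ Z)
    (hAiso : ∀ x ∈ A, ∀ y ∈ A, ω x y = 0)
    (hZiso : ∀ x ∈ Zc, ∀ y ∈ Zc, ω x y = 0)
    (hdualAZ : ∀ x ∈ A, x ≠ 0 → ∃ z ∈ Zc, ω x z ≠ 0)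
    (hdualZA : ∀ z ∈ Zc, z ≠ 0 → ∃ x ∈ A, ω x z ≠ 0)
    (hBnd : ∀ x ∈ B, x ≠ 0 → ∃ y ∈ B, ω x y ≠ 0)
    (hBorth : ∀ x ∈ B, ∀ y ∈ A ⊔ Zc, ω x y = 0)
    -- J is a compatible complex structure preserving Z and B ⊕ Z
    (J : L →ₗ[ℝ] L)
    (hJ2 : ∀ X : L, J (J X) = -X)
    (hNij : ∀ X Y : L, ⁅J X, J Y⁆ - ⁅X, Y⁆ - J ⁅J X, Y⁆ - J ⁅X, J Y⁆ = 0)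
    (hcompat : ∀ X Y : L, ω (J X) (J Y) = ω X Y)
    (hJZ : ∀ z ∈ Zc, J z ∈ Zc)
    (hJBZ : ∀ x ∈ B ⊔ Zc, J x ∈ B ⊔ Zc)
    -- associated metric and Levi-Civita connection
    (g : L → L → ℝ) (hg : ∀ X Y : L, g X Y = ω X (J Y))
    (nabla : L → L → L)
    (hkoszul : ∀ X Y Z : L,
      2 * g (nabla X Y) Z = g ⁅X, Y⁆ Z + g ⁅Z, X⁆ Y + g X ⁅Z, Y⁆)
    -- curvature tensor and a basis (for computing the Ricci trace)
    (R : L → L → L → L)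
    (hR : ∀ X Y W : L,
      R X Y W = nabla X (nabla Y W) - nabla Y (nabla X W) - nabla ⁅X, Y⁆ W)
    (b : Module.Basis (Fin 6) ℝ L) :
    (∀ X Y W : L, R X Y W ∈ Zc) ∧
    (∀ X Y W X' Y' W' : L, g (R X Y W) (R X' Y' W') = 0) ∧
    (∀ X Y : L, (∑ i : Fin 6, b.repr (R (b i) X Y) i) = 0) := by

  -- g bilinearity helpers
  have hgA1 : ∀ u v w : L, g (u + v) w = g u w + g v w := by
    intro u v w; simp only [hg, map_add, LinearMap.add_apply]
  have hgS1 : ∀ (c : ℝ) (u w : L), g (c • u) w = c * g u w := by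
    intro c u w; simp only [hg, map_smul, LinearMap.smul_apply, smul_eq_mul]
  have hgA2 : ∀ u v w : L, g u (v + w) = g u v + g u w := by
    intro u v w; simp only [hg, map_add]
  have hgS2 : ∀ (c : ℝ) (u v : L), g u (c • v) = c * g u v := by
    intro c u v; simp only [hg, map_smul, smul_eq_mul]
  have hg01 : ∀ w : L, g 0 w = 0 := by
    intro w; simp only [hg, map_zero, LinearMap.zero_apply]
  have hg02 : ∀ u : L, g u 0 = 0 := by
    intro u; simp only [hg, map_zero]
  have hgSub1 : ∀ u v w : L, g (u - v) w = g u w - g v w := by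
    intro u v w; simp only [hg, map_sub, LinearMap.sub_apply]
  have hgnd : ∀ v : L, (∀ w : L, g v w = 0) → v = 0 := by
    intro v h
    apply hnd
    intro y
    have h2 : g v (-(J y)) = 0 := h _
    rw [hg, map_neg, hJ2, neg_neg] at h2
    exact h2
  have hgext : ∀ u v : L, (∀ w : L, g u w = g v w) → u = v := by
    intro u v h
    have h0 : u - v = 0 := hgnd _ (fun w => by rw [hgSub1, h w, sub_self])
    exact sub_eq_zero.mp h0
  -- skew symmetry of ω
  have hskew : ∀ X Y : L, ω X Y = -ω Y X := by
    intro X Y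
    have h := halt (X + Y)
    simp only [map_add, LinearMap.add_apply, halt, zero_add, add_zero] at h
    linarith
  -- decomposition along A ⊕ (B ⊔ Zc)
  have hdecomp : ∀ v : L, ∃ a ∈ A, ∃ u ∈ B ⊔ Zc, v = a + u := by
    intro v
    have hv : v ∈ A ⊔ B ⊔ Zc := hspan ▸ Submodule.mem_top
    rcases Submodule.mem_sup.mp hv with ⟨p, hp, z, hz, rfl⟩
    rcases Submodule.mem_sup.mp hp with ⟨a, ha, bb, hb, rfl⟩
    exact ⟨a, ha, bb + z,
      Submodule.add_mem _ (Submodule.mem_sup_left hb) (Submodule.mem_sup_right hz),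
      (add_assoc a bb z)⟩
  -- ω-orthogonality of Zc and B ⊔ Zc
  have hωZBZ : ∀ z ∈ Zc, ∀ w ∈ B ⊔ Zc, ω z w = 0 := by
    intro z hz w hw
    rcases Submodule.mem_sup.mp hw with ⟨bb, hb, z', hz', rfl⟩
    have h1 : ω z bb = 0 := by
      rw [hskew z bb, hBorth bb hb z (Submodule.mem_sup_right hz), neg_zero]
    rw [map_add, h1, hZiso z hz z' hz', add_zero]
  have hωBZZ : ∀ w ∈ B ⊔ Zc, ∀ z ∈ Zc, ω w z = 0 := by
    intro w hw z hz
    rw [hskew, hωZBZ z hz w hw, neg_zero]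
  have hgZBZ : ∀ z ∈ Zc, ∀ w ∈ B ⊔ Zc, g z w = 0 := by
    intro z hz w hw; rw [hg]; exact hωZBZ z hz (J w) (hJBZ w hw)
  have hgBZZ : ∀ w ∈ B ⊔ Zc, ∀ z ∈ Zc, g w z = 0 := by
    intro w hw z hz; rw [hg]; exact hωBZZ w hw (J z) (hJZ z hz)
  -- membership criteria via g
  have hmemBZ : ∀ v : L, (∀ z ∈ Zc, g v z = 0) → v ∈ B ⊔ Zc := by
    intro v h
    have hω : ∀ z ∈ Zc, ω v z = 0 := by
      intro z hz
      have h2 : g v (J z) = 0 := h _ (hJZ z hz)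
      rw [hg, hJ2, map_neg] at h2
      linarith
    rcases hdecomp v with ⟨a, ha, u, hu, rfl⟩
    have ha0 : a = 0 := by
      by_contra hne
      rcases hdualAZ a ha hne with ⟨z, hz, hωaz⟩
      apply hωaz
      have h1 : ω (a + u) z = 0 := hω z hz
      have h2 : ω u z = 0 := hωBZZ u hu z hz
      rw [map_add, LinearMap.add_apply] at h1
      linarith
    rw [ha0, zero_add]; exact hu
  have hmemZ : ∀ v : L, (∀ w ∈ B ⊔ Zc, g v w = 0) → v ∈ Zc := by
    intro v h
    have hω : ∀ w ∈ B ⊔ Zc, ω v w = 0 := by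
      intro w hw
      have h2 : g v (J w) = 0 := h _ (hJBZ w hw)
      rw [hg, hJ2, map_neg] at h2
      linarith
    have hvBZ : v ∈ B ⊔ Zc := hmemBZ v (fun z hz => h z (Submodule.mem_sup_right hz))
    rcases Submodule.mem_sup.mp hvBZ with ⟨bb, hb, z, hz, rfl⟩
    have hb0 : bb = 0 := by
      by_contra hne
      rcases hBnd bb hb hne with ⟨y, hy, hωby⟩
      apply hωby
      have h1 : ω (bb + z) y = 0 := hω y (Submodule.mem_sup_left hy)
      have h2 : ω z y = 0 := hωZBZ z hz y (Submodule.mem_sup_left hy)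
      rw [map_add, LinearMap.add_apply] at h1
      linarith
    rw [hb0, zero_add]; exact hz
  -- bracket lemmas
  have hbr2 : ∀ (X v : L), v ∈ B ⊔ Zc → ⁅X, v⁆ ∈ Zc := by
    intro X v hv
    rcases hdecomp X with ⟨a, ha, u, hu, rfl⟩
    rw [add_lie, habel u hu v hv, add_zero]
    rcases Submodule.mem_sup.mp hv with ⟨bb, hb, z, hz, rfl⟩
    rw [lie_add]
    have hz0 : ⁅a, z⁆ = 0 := by
      rw [← lie_skew, hZc z hz a, neg_zero]
    rw [hz0, add_zero]
    exact hAB a ha bb hb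
  have hbr1 : ∀ (v X : L), v ∈ B ⊔ Zc → ⁅v, X⁆ ∈ Zc := by
    intro v X hv
    rw [← lie_skew]
    exact Submodule.neg_mem _ (hbr2 X v hv)
  have hder : ∀ X Y : L, ⁅X, Y⁆ ∈ B ⊔ Zc := by
    intro X Y
    rcases hdecomp X with ⟨a, ha, u, hu, rfl⟩
    rcases hdecomp Y with ⟨a', ha', u', hu', rfl⟩
    simp only [add_lie, lie_add]
    refine Submodule.add_mem _ (Submodule.add_mem _ (hAA a ha a' ha')
      (Submodule.mem_sup_right (hbr1 u a' hu)))
      (Submodule.add_mem _ (Submodule.mem_sup_right (hbr2 a u' hu'))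
      (Submodule.mem_sup_right (hbr1 u u' hu)))
  -- nabla lemmas
  have hnZ : ∀ z ∈ Zc, ∀ v : L, nabla z v = 0 := by
    intro z hz v
    apply hgnd
    intro w
    have hk := hkoszul z v w
    have h1 : ⁅w, z⁆ = 0 := by rw [← lie_skew, hZc z hz w, neg_zero]
    rw [hZc z hz v, h1, hg01, hg01, hgZBZ z hz _ (hder w v)] at hk
    linarith
  have hn01 : ∀ Y : L, nabla 0 Y = 0 := fun Y => hnZ 0 (Submodule.zero_mem _) Y
  have hn02 : ∀ X : L, nabla X 0 = 0 := by
    intro X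
    apply hgnd
    intro w
    have hk := hkoszul X 0 w
    rw [lie_zero, lie_zero, hg01, hg02, hg02] at hk
    linarith
  have hnBZ : ∀ X Y : L, nabla X Y ∈ B ⊔ Zc := by
    intro X Y
    apply hmemBZ
    intro z hz
    have hk := hkoszul X Y z
    rw [hgBZZ _ (hder X Y) z hz, hZc z hz X, hZc z hz Y, hg01, hg02] at hk
    linarith
  have hn2Z : ∀ X v : L, v ∈ B ⊔ Zc → nabla X v ∈ Zc := by
    intro X v hv
    apply hmemZ
    intro w hw
    have hk := hkoszul X v w
    rw [hgZBZ _ (hbr2 X v hv) w hw, hgZBZ _ (hbr1 w X hw) v hv,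
      habel w hw v hv, hg02] at hk
    linarith
  have hn1Z : ∀ v Y : L, v ∈ B ⊔ Zc → nabla v Y ∈ Zc := by
    intro v Y hv
    apply hmemZ
    intro w hw
    have hk := hkoszul v Y w
    rw [hgZBZ _ (hbr1 v Y hv) w hw, habel w hw v hv, hg01,
      hgBZZ v hv _ (hbr1 w Y hw)] at hk
    linarith
  -- curvature takes values in Zc
  have hRZ : ∀ X Y W : L, R X Y W ∈ Zc := by
    intro X Y W
    rw [hR]
    exact Submodule.sub_mem _ (Submodule.sub_mem _ (hn2Z X _ (hnBZ Y W))
      (hn2Z Y _ (hnBZ X W))) (hn1Z _ W (hder X Y))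
  -- linearity of nabla
  have hnadd1 : ∀ X X' Y : L, nabla (X + X') Y = nabla X Y + nabla X' Y := by
    intro X X' Y
    apply hgext
    intro w
    have h1 := hkoszul X Y w
    have h2 := hkoszul X' Y w
    have h3 := hkoszul (X + X') Y w
    rw [add_lie, lie_add, hgA1, hgA1, hgA1] at h3
    rw [hgA1]
    linarith
  have hnsmul1 : ∀ (c : ℝ) (X Y : L), nabla (c • X) Y = c • nabla X Y := by
    intro c X Y
    apply hgext
    intro w
    have h1 := hkoszul X Y w
    have h3 := hkoszul (c • X) Y w
    rw [smul_lie, lie_smul, hgS1, hgS1, hgS1] at h3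
    rw [hgS1]
    linear_combination h3 / 2 - c / 2 * h1
  have hnadd2 : ∀ X Y Y' : L, nabla X (Y + Y') = nabla X Y + nabla X Y' := by
    intro X Y Y'
    apply hgext
    intro w
    have h1 := hkoszul X Y w
    have h2 := hkoszul X Y' w
    have h3 := hkoszul X (Y + Y') w
    rw [lie_add, lie_add, hgA1, hgA2, hgA2] at h3
    rw [hgA1]
    linarith
  have hnsmul2 : ∀ (c : ℝ) (X Y : L), nabla X (c • Y) = c • nabla X Y := by
    intro c X Y
    apply hgext
    intro w
    have h1 := hkoszul X Y w
    have h3 := hkoszul X (c • Y) w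
    rw [lie_smul, lie_smul, hgS1, hgS2, hgS2] at h3
    rw [hgS1]
    linear_combination h3 / 2 - c / 2 * h1
  -- curvature vanishes on central directions
  have hRz : ∀ z ∈ Zc, ∀ X Y : L, R z X Y = 0 := by
    intro z hz X Y
    rw [hR, hnZ z hz, hnZ z hz, hn02, hZc z hz, hn01]
    simp
  refine ⟨hRZ, ?_, ?_⟩
  · intro X Y W X' Y' W'
    rw [hg]
    exact hZiso _ (hRZ X Y W) _ (hJZ _ (hRZ X' Y' W'))
  · intro X Y
    obtain ⟨T, hT⟩ : ∃ T : L →ₗ[ℝ] L, ∀ w, T w = R w X Y := by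
      refine ⟨{ toFun := fun w => R w X Y, map_add' := ?_, map_smul' := ?_ }, fun w => rfl⟩
      · intro w w'
        show R (w + w') X Y = R w X Y + R w' X Y
        rw [hR, hR, hR, add_lie, hnadd1, hnadd1, hnadd2, hnadd1]
        abel
      · intro c w
        show R (c • w) X Y = (RingHom.id ℝ) c • R w X Y
        simp only [RingHom.id_apply]
        rw [hR, hR, smul_lie, hnsmul1, hnsmul1, hnsmul2, hnsmul1, smul_sub, smul_sub]
    have hmem : ∀ w, T w ∈ Zc := fun w => by rw [hT]; exact hRZ w X Y
    have htr : ∑ i : Fin 6, (b.repr (R (b i) X Y)) i = LinearMap.trace ℝ L T := by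
      rw [LinearMap.trace_eq_matrix_trace ℝ b T, Matrix.trace]
      apply Finset.sum_congr rfl
      intro i _
      rw [Matrix.diag_apply, LinearMap.toMatrix_apply, hT]
    rw [htr]
    set S : L →ₗ[ℝ] Zc := LinearMap.codRestrict Zc T hmem with hSdef
    have hTS : T = Zc.subtype ∘ₗ S := by
      ext w; rfl
    rw [hTS, LinearMap.trace_comp_comm']
    have hS0 : S ∘ₗ Zc.subtype = 0 := by
      apply LinearMap.ext
      intro z
      apply Subtype.ext
      show T (z : L) = ((0 : Zc →ₗ[ℝ] Zc) z : L)
      rw [hT, hRz z z.2 X Y]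
      rfl
    rw [hS0, map_zero]
end
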